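/- Let ε > 0 be a real number such that δ := 1/(2ε) is a positive integer. Fix integers N ≥ 1 and γ ≥ 1, a partition of {1,…,N} into γ nonempty blocks P_1,…,P_γ of consecutive integers, a weight function w : {1,…,N} → ℚ≥0, and a rational W ≥ 0 with w(P_i) = W/γ for every i. Let D ⊆ {1,…,N} be an interval with n := #{i : P_i ⊆ D} ≥ δ, and set D^s := ∪_{P_i ⊆ D} P_i. If ℓ' and u are rationals with 0 ≤ ℓ' and ℓ'/(1+4ε) ≤ w(D^s) ≤ u, then ℓ'/(1+4ε) ≤ w(D) ≤ (1+4ε)·u. -/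

import Mathlib

/-- MaxFS scaling lemma: if the shortened driver `D^s` (union of the dissection
blocks fully contained in the interval `D = [a,bnd]`) approximately satisfies
its two-sided constraint, and `D` is good (contains `n ≥ δ = 1/(2ε)` full
blocks of weight `W/γ` each), then the full driver satisfies the constraint up
to a factor `1+4ε` on each side. -/
theorem maxfs_good_driver_violation (ε : ℚ) (hε : 0 < ε)
    (δ : ℕ) (hδ : 0 < δ) (hδε : (δ : ℚ) = 1 / (2 * ε))
    (N γ : ℕ) (hN : 1 ≤ N) (hγ : 1 ≤ γ)
    (c : Fin (γ + 1) → ℕ) (hc0 : c 0 = 0) (hclast : c (Fin.last γ) = N)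
    (hmono : StrictMono c)
    (P : Fin γ → Finset ℕ)
    (hP : ∀ i : Fin γ, P i = Finset.Ioc (c i.castSucc) (c i.succ))
    (w : ℕ → ℚ) (hw : ∀ e, 0 ≤ w e)
    (W : ℚ) (hW : 0 ≤ W)
    (hblocks : ∀ i, ∑ e ∈ P i, w e = W / γ)
    (a bnd : ℕ) (ha : 1 ≤ a) (hbnd : bnd ≤ N)
    (n : ℕ)
    (hn : n = (Finset.univ.filter (fun i => P i ⊆ Finset.Icc a bnd)).card)
    (hgood : δ ≤ n)
    (Ds : Finset ℕ)
    (hDs : Ds = (Finset.univ.filter (fun i => P i ⊆ Finset.Icc a bnd)).biUnion P)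
    (ℓ' u : ℚ) (hℓ' : 0 ≤ ℓ')
    (hlo : ℓ' / (1 + 4 * ε) ≤ ∑ e ∈ Ds, w e)
    (hhi : ∑ e ∈ Ds, w e ≤ u) :
    ℓ' / (1 + 4 * ε) ≤ ∑ e ∈ Finset.Icc a bnd, w e ∧
      ∑ e ∈ Finset.Icc a bnd, w e ≤ (1 + 4 * ε) * u := by
  -- pairwise disjointness of blocks
  have hdisj : ∀ i j : Fin γ, i ≠ j → Disjoint (P i) (P j) := by
    intro i j hij
    rw [Finset.disjoint_left]
    intro e hei hej
    rw [hP i, Finset.mem_Ioc] at hei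
    rw [hP j, Finset.mem_Ioc] at hej
    rcases lt_or_gt_of_ne hij with h | h
    · have hv : (i:ℕ) < (j:ℕ) := h
      have : c i.succ ≤ c j.castSucc := hmono.monotone (by
        rw [Fin.le_def]; simp only [Fin.val_succ, Fin.coe_castSucc]; omega)
      omega
    · have hv : (j:ℕ) < (i:ℕ) := h
      have : c j.succ ≤ c i.castSucc := hmono.monotone (by
        rw [Fin.le_def]; simp only [Fin.val_succ, Fin.coe_castSucc]; omega)
      omega
  -- every point of [1,N] belongs to some block
  have hexists : ∀ x : ℕ, 1 ≤ x → x ≤ N → ∃ j : Fin γ, x ∈ P j := by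
    intro x hx1 hxN
    set T : Finset (Fin (γ+1)) := Finset.univ.filter (fun j => c j < x) with hT
    have hT0 : (0 : Fin (γ+1)) ∈ T := by simp [hT, hc0]; omega
    have hTne : T.Nonempty := ⟨0, hT0⟩
    set m := T.max' hTne with hm
    have hmT : m ∈ T := T.max'_mem hTne
    have hmlt : c m < x := by simpa [hT] using hmT
    have hmne : m ≠ Fin.last γ := by
      intro h
      rw [h, hclast] at hmlt; omega
    obtain ⟨j, hj⟩ := Fin.exists_castSucc_eq.mpr hmne
    refine ⟨j, ?_⟩
    rw [hP j, Finset.mem_Ioc]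
    constructor
    · rw [← hj] at hmlt; exact hmlt
    · by_contra hcon
      push_neg at hcon
      have : j.succ ∈ T := by simp [hT]; omega
      have := T.le_max' _ this
      rw [← hm, ← hj] at this
      exact absurd this (not_le.mpr (Fin.castSucc_lt_succ : j.castSucc < j.succ))
  -- a ≤ bnd (otherwise no block fits, contradicting goodness)
  have hab : a ≤ bnd := by
    by_contra hcon
    push_neg at hcon
    have : (Finset.univ.filter (fun i => P i ⊆ Finset.Icc a bnd)) = ∅ := by
      rw [Finset.filter_eq_empty_iff]
      intro i _ hsub
      have : c i.castSucc + 1 ∈ P i := by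
        rw [hP i, Finset.mem_Ioc]
        exact ⟨Nat.lt_succ_self _, hmono (Fin.castSucc_lt_succ : i.castSucc < i.succ)⟩
      have := hsub this
      rw [Finset.mem_Icc] at this
      omega
    rw [this] at hn
    simp at hn
    omega
  -- Ds ⊆ D
  have hDsub : Ds ⊆ Finset.Icc a bnd := by
    rw [hDs]
    intro e he
    rw [Finset.mem_biUnion] at he
    obtain ⟨i, hi, hei⟩ := he
    rw [Finset.mem_filter] at hi
    exact hi.2 hei
  -- blocks containing a and bnd
  obtain ⟨i0, hi0⟩ := hexists a ha (le_trans hab hbnd)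
  obtain ⟨i1, hi1⟩ := hexists bnd (le_trans ha hab) hbnd
  -- covering: D ⊆ Ds ∪ P i0 ∪ P i1
  have hcover : Finset.Icc a bnd ⊆ Ds ∪ (P i0 ∪ P i1) := by
    intro e he
    rw [Finset.mem_Icc] at he
    obtain ⟨j, hj⟩ := hexists e (le_trans ha he.1) (le_trans he.2 hbnd)
    by_cases hfull : P j ⊆ Finset.Icc a bnd
    · apply Finset.mem_union_left
      rw [hDs, Finset.mem_biUnion]
      exact ⟨j, by simp [hfull], hj⟩
    · apply Finset.mem_union_right
      have hjm := hj
      rw [hP j, Finset.mem_Ioc] at hjm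
      have hnf : c j.castSucc + 1 < a ∨ bnd < c j.succ := by
        by_contra hcon
        push_neg at hcon
        apply hfull
        rw [hP j]
        intro x hx
        rw [Finset.mem_Ioc] at hx
        rw [Finset.mem_Icc]
        omega
      rcases hnf with h | h
      · -- a ∈ P j, so j = i0
        have haj : a ∈ P j := by
          rw [hP j, Finset.mem_Ioc]; omega
        have : j = i0 := by
          by_contra hne
          exact (Finset.disjoint_left.mp (hdisj j i0 hne)) haj hi0
        exact Finset.mem_union_left _ (this ▸ hj)
      · have hbj : bnd ∈ P j := by
          rw [hP j, Finset.mem_Ioc]; omega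
        have : j = i1 := by
          by_contra hne
          exact (Finset.disjoint_left.mp (hdisj j i1 hne)) hbj hi1
        exact Finset.mem_union_right _ (this ▸ hj)
  -- w(Ds) = n * (W/γ)
  have hDsum : ∑ e ∈ Ds, w e = (n : ℚ) * (W / γ) := by
    rw [hDs, Finset.sum_biUnion]
    · rw [Finset.sum_congr rfl (fun i _ => hblocks i), Finset.sum_const, hn,
        nsmul_eq_mul]
    · intro i hi j hj hij
      exact hdisj i j hij
  have hγQ : (0:ℚ) < (γ:ℚ) := by exact_mod_cast hγ
  have hWγ : (0:ℚ) ≤ W / γ := div_nonneg hW (le_of_lt hγQ)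
  have hsum_union_le : ∀ s t : Finset ℕ,
      ∑ e ∈ s ∪ t, w e ≤ ∑ e ∈ s, w e + ∑ e ∈ t, w e := by
    intro s t
    rw [← Finset.union_sdiff_self_eq_union, Finset.sum_union Finset.disjoint_sdiff]
    exact add_le_add (le_refl _) (Finset.sum_le_sum_of_subset_of_nonneg
      Finset.sdiff_subset (fun e _ _ => hw e))
  -- lower bound
  have hlow : ∑ e ∈ Ds, w e ≤ ∑ e ∈ Finset.Icc a bnd, w e :=
    Finset.sum_le_sum_of_subset_of_nonneg hDsub (fun e _ _ => hw e)
  refine ⟨le_trans hlo hlow, ?_⟩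
  -- upper bound
  have hsplit : ∑ e ∈ Finset.Icc a bnd, w e ≤ ∑ e ∈ Ds, w e + 2 * (W / γ) := by
    calc ∑ e ∈ Finset.Icc a bnd, w e
        ≤ ∑ e ∈ Ds ∪ (P i0 ∪ P i1), w e :=
          Finset.sum_le_sum_of_subset_of_nonneg hcover (fun e _ _ => hw e)
      _ ≤ ∑ e ∈ Ds, w e + ∑ e ∈ P i0 ∪ P i1, w e := hsum_union_le _ _
      _ ≤ ∑ e ∈ Ds, w e + (∑ e ∈ P i0, w e + ∑ e ∈ P i1, w e) := by
          gcongr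
          exact hsum_union_le _ _
      _ = ∑ e ∈ Ds, w e + 2 * (W / γ) := by
          rw [hblocks i0, hblocks i1]; ring
  -- 2 * (W/γ) ≤ 4ε * w(Ds)
  have hδn : (δ:ℚ) ≤ (n:ℚ) := by exact_mod_cast hgood
  have h2 : 2 * (W / γ) ≤ 4 * ε * ∑ e ∈ Ds, w e := by
    rw [hDsum]
    have hδpos : (0:ℚ) < (δ:ℚ) := by exact_mod_cast hδ
    have h4εδ : 4 * ε * (δ:ℚ) = 2 := by
      rw [hδε]; field_simp; ring
    calc 2 * (W / γ) = 4 * ε * (δ:ℚ) * (W / γ) := by rw [h4εδ]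
      _ ≤ 4 * ε * (n:ℚ) * (W / γ) := by
          apply mul_le_mul_of_nonneg_right _ hWγ
          apply mul_le_mul_of_nonneg_left hδn
          positivity
      _ = 4 * ε * ((n:ℚ) * (W / γ)) := by ring
  have hDsu : 0 ≤ ∑ e ∈ Ds, w e := Finset.sum_nonneg (fun e _ => hw e)
  calc ∑ e ∈ Finset.Icc a bnd, w e
      ≤ ∑ e ∈ Ds, w e + 2 * (W / γ) := hsplit
    _ ≤ ∑ e ∈ Ds, w e + 4 * ε * ∑ e ∈ Ds, w e := by linarith
    _ = (1 + 4 * ε) * ∑ e ∈ Ds, w e := by ring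
    _ ≤ (1 + 4 * ε) * u := by
        apply mul_le_mul_of_nonneg_left hhi
        positivity
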